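/- Let ε > 0 and A > 0. There exist constants c_1 > 0, c_2 > 0 and P such that for every prime p ≥ P and every subset D ⊆ ℤ/pℤ with n = |D| ≥ (log p)^{1+ε} whose Fourier bias satisfies Φ(D) ≤ A·√(n · log p), and for every integer k with c_1 · (log p)/(log log p) ≤ k ≤ c_2 · n, every element b ∈ ℤ/pℤ can be written as a sum of k pairwise distinct elements of D. -/

import Mathlib

open Finset

/-- The Fourier bias of a subset `D ⊆ ℤ/pℤ`:
`Φ(D) = max_{χ ≠ 1} |Σ_{a ∈ D} χ(a)|`, the maximum over nontrivial additive
characters of the absolute value of the character sum over `D`. -/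
noncomputable def fourierBias {p : ℕ} (D : Finset (ZMod p)) : ℝ :=
  sSup {r : ℝ | ∃ χ : AddChar (ZMod p) ℂ, χ ≠ 1 ∧ r = ‖∑ a ∈ D, χ a‖}

/- ### Auxiliary lemmas -/

/-- The bounding sequence `B m = Φ(Φ+1)⋯(Φ+m-1)/m!`. -/
noncomputable def Bfun (Φ : ℝ) (m : ℕ) : ℝ := (∏ j ∈ range m, (Φ + j)) / m.factorial

lemma Bfun_nonneg {Φ : ℝ} (hΦ : 0 ≤ Φ) (m : ℕ) : 0 ≤ Bfun Φ m := by
  apply div_nonneg _ (by positivity)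
  exact Finset.prod_nonneg fun j _ => by positivity

lemma Bfun_rec {Φ : ℝ} (hΦ : 0 ≤ Φ) : ∀ m : ℕ,
    Φ * ∑ i ∈ range m, Bfun Φ i ≤ m * Bfun Φ m := by
  intro m
  induction m with
  | zero => simp
  | succ m ih =>
    rw [Finset.sum_range_succ, mul_add]
    have key : ((m:ℝ)+1) * Bfun Φ (m+1) = (Φ + m) * Bfun Φ m := by
      unfold Bfun
      rw [Finset.prod_range_succ, Nat.factorial_succ]
      have h1 : (m.factorial : ℝ) ≠ 0 := by positivity
      push_cast
      field_simp
    push_cast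
    rw [key]
    nlinarith [Bfun_nonneg hΦ m]

lemma aeval_esymm {σ : Type*} [Fintype σ] [DecidableEq σ] (x : σ → ℂ) (m : ℕ) :
    MvPolynomial.aeval x (MvPolynomial.esymm σ ℂ m)
      = ∑ S ∈ powersetCard m (univ : Finset σ), ∏ i ∈ S, x i := by
  simp [MvPolynomial.esymm, map_sum, map_prod]

lemma aeval_psum {σ : Type*} [Fintype σ] [DecidableEq σ] (x : σ → ℂ) (m : ℕ) :
    MvPolynomial.aeval x (MvPolynomial.psum σ ℂ m) = ∑ i, x i ^ m := by
  simp [MvPolynomial.psum]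

/-- Newton's identity, evaluated at complex numbers. -/
lemma newton_eval {σ : Type*} [Fintype σ] [DecidableEq σ] (x : σ → ℂ) (m : ℕ) :
    (m : ℂ) * ∑ S ∈ powersetCard m (univ : Finset σ), ∏ i ∈ S, x i
      = (-1) ^ (m + 1) * ∑ a ∈ (antidiagonal m).filter (fun a => a.1 < m),
          (-1) ^ a.1 * (∑ S ∈ powersetCard a.1 (univ : Finset σ), ∏ i ∈ S, x i) * ∑ i, x i ^ a.2 := by
  have := congrArg (MvPolynomial.aeval x) (MvPolynomial.mul_esymm_eq_sum σ ℂ m)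
  simpa [map_sum, map_mul, map_pow, aeval_esymm, aeval_psum] using this

/-- Bound on elementary symmetric sums via power-sum bounds (Newton's identities). -/
lemma esymm_norm_le {σ : Type*} [Fintype σ] [DecidableEq σ] (x : σ → ℂ) (Φ : ℝ) (K : ℕ)
    (hΦ0 : 0 ≤ Φ)
    (hP : ∀ j : ℕ, 1 ≤ j → j ≤ K → ‖∑ i, x i ^ j‖ ≤ Φ) :
    ∀ m : ℕ, m ≤ K → ‖∑ S ∈ powersetCard m (univ : Finset σ), ∏ i ∈ S, x i‖ ≤ Bfun Φ m := by
  intro m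
  induction m using Nat.strong_induction_on with
  | _ m ih =>
    intro hmK
    match m with
    | 0 => simp [Bfun]
    | Nat.succ mm =>
      set m := mm + 1
      have hm0 : 0 < m := Nat.succ_pos mm
      have key := newton_eval x m
      have hnorm : (m : ℝ) * ‖∑ S ∈ powersetCard m (univ : Finset σ), ∏ i ∈ S, x i‖
          ≤ Φ * ∑ i ∈ range m, Bfun Φ i := by
        have h1 : (m : ℝ) * ‖∑ S ∈ powersetCard m (univ : Finset σ), ∏ i ∈ S, x i‖
            = ‖(m : ℂ) * ∑ S ∈ powersetCard m (univ : Finset σ), ∏ i ∈ S, x i‖ := by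
          rw [norm_mul]
          simp
        rw [h1, key]
        rw [norm_mul, norm_pow, norm_neg, norm_one, one_pow, one_mul]
        calc ‖∑ a ∈ (antidiagonal m).filter (fun a => a.1 < m),
              (-1:ℂ) ^ a.1 * (∑ S ∈ powersetCard a.1 (univ : Finset σ), ∏ i ∈ S, x i) * ∑ i, x i ^ a.2‖
            ≤ ∑ a ∈ (antidiagonal m).filter (fun a => a.1 < m),
              ‖(-1:ℂ) ^ a.1 * (∑ S ∈ powersetCard a.1 (univ : Finset σ), ∏ i ∈ S, x i) * ∑ i, x i ^ a.2‖ :=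
              norm_sum_le _ _
          _ ≤ ∑ a ∈ (antidiagonal m).filter (fun a => a.1 < m), Bfun Φ a.1 * Φ := by
              apply Finset.sum_le_sum
              intro a ha
              rw [Finset.mem_filter, Finset.HasAntidiagonal.mem_antidiagonal] at ha
              obtain ⟨hsum, hlt⟩ := ha
              rw [norm_mul, norm_mul, norm_pow, norm_neg, norm_one, one_pow, one_mul]
              have h2 : ‖∑ S ∈ powersetCard a.1 (univ : Finset σ), ∏ i ∈ S, x i‖ ≤ Bfun Φ a.1 :=
                ih a.1 hlt (le_trans (le_of_lt hlt) hmK)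
              have h3 : ‖∑ i, x i ^ a.2‖ ≤ Φ := by
                apply hP a.2
                · omega
                · omega
              exact mul_le_mul h2 h3 (norm_nonneg _) (Bfun_nonneg hΦ0 a.1)
          _ = Φ * ∑ i ∈ range m, Bfun Φ i := by
              rw [Finset.sum_filter, Finset.Nat.sum_antidiagonal_eq_sum_range_succ_mk,
                Finset.sum_range_succ, if_neg (lt_irrefl m), add_zero, Finset.mul_sum]
              apply Finset.sum_congr rfl
              intro i hi
              rw [Finset.mem_range] at hi
              rw [if_pos hi, mul_comm]
      have hfin := le_trans hnorm (Bfun_rec hΦ0 m)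
      have hm : (0:ℝ) < m := by exact_mod_cast hm0
      calc ‖∑ S ∈ powersetCard m (univ : Finset σ), ∏ i ∈ S, x i‖
          = ((m:ℝ) * ‖∑ S ∈ powersetCard m (univ : Finset σ), ∏ i ∈ S, x i‖) / m := by
            field_simp
        _ ≤ ((m:ℝ) * Bfun Φ m) / m := div_le_div_of_nonneg_right hfin hm.le
        _ = Bfun Φ m := by field_simp

lemma addChar_map_sum {A M : Type*} [AddCommGroup A] [CommMonoid M] (χ : AddChar A M)
    {ι : Type*} (T : Finset ι) (g : ι → A) :
    χ (∑ i ∈ T, g i) = ∏ i ∈ T, χ (g i) := by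
  induction T using Finset.cons_induction with
  | empty => simp
  | cons a s ha ih => rw [Finset.sum_cons, Finset.prod_cons, AddChar.map_add_eq_mul, ih]

lemma char_powerset_sum {p : ℕ} (D : Finset (ZMod p)) (χ : AddChar (ZMod p) ℂ) (k : ℕ) :
    ∑ S ∈ powersetCard k D, χ (S.sum id)
      = ∑ T ∈ powersetCard k (univ : Finset {x // x ∈ D}), ∏ i ∈ T, χ i.1 := by
  classical
  conv_lhs => rw [← Finset.attach_map_val (s := D)]
  rw [Finset.powersetCard_map, Finset.sum_map]
  rw [Finset.univ_eq_attach]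
  apply Finset.sum_congr rfl
  intro T _
  show χ ((Finset.mapEmbedding _ T).sum id) = _
  rw [Finset.mapEmbedding_apply, Finset.sum_map, addChar_map_sum]
  simp

/-- The basic orthogonality counting identity. -/
lemma counting {p : ℕ} [NeZero p] (D : Finset (ZMod p)) (k : ℕ) (b : ZMod p) :
    (p : ℂ) * (((powersetCard k D).filter (fun S => S.sum id = b)).card : ℂ)
      = (D.card.choose k : ℂ)
        + ∑ χ ∈ (univ : Finset (AddChar (ZMod p) ℂ)).erase 1,
            χ (-b) * ∑ S ∈ powersetCard k D, χ (S.sum id) := by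
  classical
  have lhs_eq : ∑ S ∈ powersetCard k D, ∑ χ : AddChar (ZMod p) ℂ, χ (S.sum id - b)
      = (p : ℂ) * (((powersetCard k D).filter (fun S => S.sum id = b)).card : ℂ) := by
    have h1 : ∀ S ∈ powersetCard k D, ∑ χ : AddChar (ZMod p) ℂ, χ (S.sum id - b)
        = if S.sum id = b then (p : ℂ) else 0 := by
      intro S _
      rw [AddChar.sum_apply_eq_ite]
      simp [sub_eq_zero, ZMod.card]
    rw [Finset.sum_congr rfl h1, ← Finset.sum_filter]
    rw [Finset.sum_const]
    push_cast
    ring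
  rw [← lhs_eq, Finset.sum_comm]
  rw [← Finset.add_sum_erase _ _ (Finset.mem_univ (1 : AddChar (ZMod p) ℂ))]
  congr 1
  · simp [Finset.card_powersetCard]
  · apply Finset.sum_congr rfl
    intro χ _
    rw [Finset.mul_sum]
    apply Finset.sum_congr rfl
    intro S _
    rw [sub_eq_add_neg, AddChar.map_add_eq_mul, mul_comm]

/-- The purely analytic inequality. -/
lemma analytic (ε A : ℝ) (hε : 0 < ε) (hA : 0 < A) (L n Φ : ℝ) (k : ℕ)
    (hL3 : 3 ≤ L)
    (hLa : (2*(A+1))^((4:ℝ)/ε) ≤ L)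
    (hLb : (400*A)^((2:ℝ)/ε) ≤ L)
    (hn : L^(1+ε) ≤ n)
    (hΦ : Φ ≤ A * Real.sqrt (n*L)) (hΦ0 : 0 ≤ Φ)
    (hk1 : 12/ε * L / Real.log L ≤ (k:ℝ)) (hk2 : (k:ℝ) ≤ n/200) (hk0 : 1 ≤ k) :
    Real.exp L * (Φ + k)^k < (n - k)^k := by
  have hL1 : (1:ℝ) ≤ L := by linarith
  have hL0 : (0:ℝ) < L := by linarith
  have hLL : 0 < Real.log L := Real.log_pos (by linarith)
  have hn0 : (0:ℝ) < n := lt_of_lt_of_le (Real.rpow_pos_of_pos hL0 _) hn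
  have hk0' : (1:ℝ) ≤ (k:ℝ) := by exact_mod_cast hk0
  have hkn : (k:ℝ) ≤ n/2 := by linarith
  have hLe : (0:ℝ) < L^(-(ε/2)) := Real.rpow_pos_of_pos hL0 _
  have hsq : Real.sqrt (n * L) ≤ n * L^(-(ε/2)) := by
    have h1 : L ≤ n * L^(-(ε:ℝ)) := by
      have : L^(1+ε) * L^(-(ε:ℝ)) = L := by
        rw [← Real.rpow_add hL0]; norm_num
      calc L = L^(1+ε) * L^(-(ε:ℝ)) := this.symm
        _ ≤ n * L^(-(ε:ℝ)) := by
            apply mul_le_mul_of_nonneg_right hn (Real.rpow_nonneg hL0.le _)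
    have h2 : n * L ≤ n^2 * L^(-(ε:ℝ)) := by
      calc n * L ≤ n * (n * L^(-(ε:ℝ))) := by nlinarith
        _ = n^2 * L^(-(ε:ℝ)) := by ring
    calc Real.sqrt (n * L) ≤ Real.sqrt (n^2 * L^(-(ε:ℝ))) := Real.sqrt_le_sqrt h2
      _ = n * L^(-(ε/2)) := by
          rw [Real.sqrt_mul (by positivity), Real.sqrt_sq hn0.le]
          congr 1
          rw [Real.sqrt_eq_rpow, ← Real.rpow_mul hL0.le]
          congr 1
          ring
  have hΦ' : Φ ≤ A * (n * L^(-(ε/2))) :=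
    le_trans hΦ (mul_le_mul_of_nonneg_left hsq hA.le)
  have hΦk : (0:ℝ) < Φ + k := by linarith
  have main : ∃ W : ℝ, 0 < W ∧ (Φ + k) * W ≤ n - k ∧ Real.exp L < W^k := by
    rcases le_or_gt (k:ℝ) (n * L^(-(ε/2))) with hcase | hcase
    · refine ⟨L^(ε/4), Real.rpow_pos_of_pos hL0 _, ?_, ?_⟩
      · have hW : 2*(A+1) ≤ L^(ε/4) := by
          calc 2*(A+1) = ((2*(A+1))^((4:ℝ)/ε))^(ε/4) := by
                rw [← Real.rpow_mul (by positivity)]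
                have hx : (4:ℝ)/ε * (ε/4) = 1 := by field_simp
                rw [hx, Real.rpow_one]
            _ ≤ L^(ε/4) := Real.rpow_le_rpow (by positivity) hLa (by positivity)
        have h3 : Φ + k ≤ (A+1) * (n * L^(-(ε/2))) := by nlinarith
        have h4 : L^(-(ε/2)) * L^(ε/4) = (L^(ε/4))⁻¹ := by
          rw [← Real.rpow_add hL0, ← Real.rpow_neg hL0.le]
          congr 1
          ring
        have h5 : (Φ + k) * L^(ε/4) ≤ (A+1) * n * (L^(ε/4))⁻¹ := by
          calc (Φ + k) * L^(ε/4) ≤ (A+1) * (n * L^(-(ε/2))) * L^(ε/4) := by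
                apply mul_le_mul_of_nonneg_right h3 (Real.rpow_nonneg hL0.le _)
            _ = (A+1) * n * (L^(-(ε/2)) * L^(ε/4)) := by ring
            _ = (A+1) * n * (L^(ε/4))⁻¹ := by rw [h4]
        have h6 : (A+1) * n * (L^(ε/4))⁻¹ ≤ n/2 := by
          rw [mul_inv_le_iff₀ (by positivity)]
          calc (A+1)*n = n * (A+1) := by ring
            _ ≤ n * (L^(ε/4)/2) := by
                apply mul_le_mul_of_nonneg_left _ hn0.le
                linarith
            _ = n/2 * L^(ε/4) := by ring
        linarith
      · have h7 : L^(ε/4) = Real.exp (ε/4 * Real.log L) := by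
          rw [Real.rpow_def_of_pos hL0]; ring_nf
        rw [h7, ← Real.exp_nat_mul]
        apply Real.exp_lt_exp.mpr
        have h8 : (k:ℝ) * (ε/4 * Real.log L) ≥ (12/ε * L / Real.log L) * (ε/4 * Real.log L) := by
          apply mul_le_mul_of_nonneg_right hk1 (by positivity)
        have h9 : (12/ε * L / Real.log L) * (ε/4 * Real.log L) = 3 * L := by
          field_simp
          ring
        nlinarith
    · refine ⟨50, by norm_num, ?_, ?_⟩
      · have hAL : A * L^(-(ε/2)) ≤ 1/400 := by
          have hW : 400*A ≤ L^(ε/2) := by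
            calc 400*A = ((400*A)^((2:ℝ)/ε))^(ε/2) := by
                  rw [← Real.rpow_mul (by positivity)]
                  have hx : (2:ℝ)/ε * (ε/2) = 1 := by field_simp
                  rw [hx, Real.rpow_one]
              _ ≤ L^(ε/2) := Real.rpow_le_rpow (by positivity) hLb (by positivity)
          have hinv : L^(-(ε/2)) = (L^(ε/2))⁻¹ := by
            rw [← Real.rpow_neg hL0.le]
          rw [hinv]
          rw [mul_inv_le_iff₀ (by positivity)]
          calc A = (400 * A)/400 := by ring
            _ ≤ L^(ε/2)/400 := by linarith
            _ = 1/400 * L^(ε/2) := by ring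
        have hΦn : Φ ≤ n/400 := by
          calc Φ ≤ A * (n * L^(-(ε/2))) := hΦ'
            _ = n * (A * L^(-(ε/2))) := by ring
            _ ≤ n * (1/400) := mul_le_mul_of_nonneg_left hAL hn0.le
            _ = n/400 := by ring
        nlinarith
      · have hkL : L < (k:ℝ) := by
          have h10 : L ≤ L^(1+ε/2) := by
            calc L = L^(1:ℝ) := (Real.rpow_one L).symm
              _ ≤ L^(1+ε/2) := Real.rpow_le_rpow_of_exponent_le hL1 (by linarith)
          have h11 : L^(1+ε/2) ≤ n * L^(-(ε/2)) := by
            have : L^(1+ε) * L^(-(ε/2)) = L^(1+ε/2) := by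
              rw [← Real.rpow_add hL0]; ring_nf
            rw [← this]
            apply mul_le_mul_of_nonneg_right hn (Real.rpow_nonneg hL0.le _)
          linarith
        have hexp3 : Real.exp 3 ≤ 50 := by
          have h := Real.exp_one_lt_d9
          calc Real.exp 3 = (Real.exp 1)^(3:ℕ) := by
                rw [← Real.exp_nat_mul]; norm_num
            _ ≤ (2.7182818286:ℝ)^(3:ℕ) := by
                apply pow_le_pow_left₀ (Real.exp_pos 1).le h.le
            _ ≤ 50 := by norm_num
        calc Real.exp L < Real.exp (3*k) := by
              apply Real.exp_lt_exp.mpr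
              nlinarith
          _ = (Real.exp 3)^k := by rw [← Real.exp_nat_mul]; ring_nf
          _ ≤ 50^k := pow_le_pow_left₀ (Real.exp_pos 3).le hexp3 k
  obtain ⟨W, hW0, hW1, hW2⟩ := main
  calc Real.exp L * (Φ + k)^k < W^k * (Φ + k)^k := by
        apply mul_lt_mul_of_pos_right hW2 (by positivity)
    _ = ((Φ + k) * W)^k := by rw [← mul_pow]; ring_nf
    _ ≤ (n - k)^k := pow_le_pow_left₀ (by positivity) hW1 k

/-- Let `ε > 0` and `A > 0`.  There are constants `c₁, c₂ > 0` and `P` such that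
for every prime `p ≥ P`, every `D ⊆ ℤ/pℤ` with `n = |D| ≥ (log p)^{1+ε}` that is
smooth (i.e. `Φ(D) ≤ A √(n log p)`), and every `k` with
`c₁ log p / log log p ≤ k ≤ c₂ n`, every `b ∈ ℤ/pℤ` is a sum of `k` pairwise
distinct elements of `D`. -/
theorem every_element_is_k_subset_sum (ε A : ℝ) (hε : 0 < ε) (hA : 0 < A) :
    ∃ c₁ > (0 : ℝ), ∃ c₂ > (0 : ℝ), ∃ P : ℕ, ∀ p : ℕ, p.Prime → P ≤ p →
      ∀ D : Finset (ZMod p),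
        Real.log p ^ (1 + ε) ≤ (D.card : ℝ) →
        fourierBias D ≤ A * Real.sqrt (D.card * Real.log p) →
        ∀ k : ℕ, c₁ * Real.log p / Real.log (Real.log p) ≤ (k : ℝ) →
          (k : ℝ) ≤ c₂ * D.card →
          ∀ b : ZMod p, ∃ S ⊆ D, S.card = k ∧ S.sum id = b := by
  classical
  set M : ℝ := max (max 3 ((2*(A+1))^((4:ℝ)/ε))) ((400*A)^((2:ℝ)/ε)) with hM
  refine ⟨12/ε, by positivity, 1/200, by norm_num, ⌈Real.exp M⌉₊, ?_⟩
  intro p hp hP D hn hbias k hk1 hk2 b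
  haveI : Fact p.Prime := ⟨hp⟩
  haveI : NeZero p := ⟨hp.ne_zero⟩
  set L : ℝ := Real.log p with hLdef
  set n : ℕ := D.card with hndef
  -- L ≥ M
  have hpM : Real.exp M ≤ (p:ℝ) := le_trans (Nat.le_ceil _) (by exact_mod_cast hP)
  have hML : M ≤ L := by
    have := Real.log_le_log (Real.exp_pos M) hpM
    rwa [Real.log_exp] at this
  have hL3 : (3:ℝ) ≤ L := le_trans (le_trans (le_max_left _ _) (le_max_left _ _)) hML
  have hLa : (2*(A+1))^((4:ℝ)/ε) ≤ L :=
    le_trans (le_trans (le_max_right _ _) (le_max_left _ _)) hML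
  have hLb : (400*A)^((2:ℝ)/ε) ≤ L := le_trans (le_max_right _ _) hML
  have hL0 : (0:ℝ) < L := by linarith
  have hLL : 0 < Real.log L := Real.log_pos (by linarith)
  -- basic size facts
  have hn1 : (1:ℝ) ≤ (n:ℝ) := by
    refine le_trans ?_ hn
    calc (1:ℝ) = L^(0:ℝ) := (Real.rpow_zero L).symm
      _ ≤ L^(1+ε) := Real.rpow_le_rpow_of_exponent_le (by linarith) (by linarith)
  have hk2' : (k:ℝ) ≤ (n:ℝ)/200 := by
    rw [show (n:ℝ)/200 = 1/200 * n by ring]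
    exact hk2
  have hk0 : 1 ≤ k := by
    by_contra h
    push_neg at h
    interval_cases k
    · have : (0:ℝ) < 12/ε * L / Real.log L := by positivity
      simp at hk1
      linarith
  have hk0' : (1:ℝ) ≤ (k:ℝ) := by exact_mod_cast hk0
  have hkn : k ≤ n := by
    have : (k:ℝ) ≤ (n:ℝ) := by linarith
    exact_mod_cast this
  have hnp : n ≤ p := by
    calc n ≤ Fintype.card (ZMod p) := Finset.card_le_univ D
      _ = p := ZMod.card p
  have hkp : k < p := by
    have h1 : (k:ℝ) < (n:ℝ) := by linarith
    have : k < n := by exact_mod_cast h1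
    omega
  -- Fourier bias facts
  set Φ : ℝ := fourierBias D with hΦdef
  have hbdd : BddAbove {r : ℝ | ∃ χ : AddChar (ZMod p) ℂ, χ ≠ 1 ∧ r = ‖∑ a ∈ D, χ a‖} := by
    refine ⟨(n:ℝ), ?_⟩
    rintro r ⟨χ, hχ, rfl⟩
    calc ‖∑ a ∈ D, χ a‖ ≤ ∑ a ∈ D, ‖χ a‖ := norm_sum_le _ _
      _ = (n:ℝ) := by simp [hndef]
  have hmem : ∀ χ : AddChar (ZMod p) ℂ, χ ≠ 1 → ‖∑ a ∈ D, χ a‖ ≤ Φ := fun χ h =>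
    le_csSup hbdd ⟨χ, h, rfl⟩
  have hΦ0 : 0 ≤ Φ := by
    obtain ⟨χ, hχ⟩ := Fintype.exists_ne_of_one_lt_card
      (by rw [AddChar.card_eq, ZMod.card]; exact hp.one_lt) (1 : AddChar (ZMod p) ℂ)
    exact le_trans (norm_nonneg _) (hmem χ hχ)
  -- the E-sum bound for nontrivial characters
  have hE : ∀ χ : AddChar (ZMod p) ℂ, χ ≠ 1 →
      ‖∑ S ∈ powersetCard k D, χ (S.sum id)‖ ≤ Bfun Φ k := by
    intro χ hχ
    rw [char_powerset_sum]
    apply esymm_norm_le _ Φ k hΦ0 _ k le_rfl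
    intro j hj1 hjk
    have hsum : ∑ i : {x // x ∈ D}, (χ i.1) ^ j = ∑ a ∈ D, (AddChar.mulShift χ (j : ZMod p)) a := by
      rw [Finset.univ_eq_attach, Finset.sum_attach D (fun a => (χ a)^j)]
      apply Finset.sum_congr rfl
      intro a _
      rw [AddChar.mulShift_spec']
    have hjne : ((j : ZMod p)) ≠ 0 := by
      rw [Ne, ZMod.natCast_eq_zero_iff]
      intro hdvd
      have := Nat.le_of_dvd (by omega) hdvd
      omega
    have hχ' : AddChar.mulShift χ (j : ZMod p) ≠ 1 :=
      AddChar.IsPrimitive.of_ne_one hχ hjne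
    rw [hsum]
    exact hmem _ hχ'
  -- counting
  set N : ℕ := ((powersetCard k D).filter (fun S => S.sum id = b)).card with hNdef
  have key := counting D k b
  have hre : (p:ℝ) * (N:ℝ) = (n.choose k : ℝ)
      + (∑ χ ∈ (univ : Finset (AddChar (ZMod p) ℂ)).erase 1,
          χ (-b) * ∑ S ∈ powersetCard k D, χ (S.sum id)).re := by
    have := congrArg Complex.re key
    simp only [Complex.add_re, Complex.mul_re, Complex.natCast_re, Complex.natCast_im, mul_zero,
      zero_mul, sub_zero] at this
    exact this
  -- bound the error term
  have herr : |(∑ χ ∈ (univ : Finset (AddChar (ZMod p) ℂ)).erase 1,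
      χ (-b) * ∑ S ∈ powersetCard k D, χ (S.sum id)).re| ≤ (p:ℝ) * Bfun Φ k := by
    calc |(∑ χ ∈ (univ : Finset (AddChar (ZMod p) ℂ)).erase 1,
          χ (-b) * ∑ S ∈ powersetCard k D, χ (S.sum id)).re|
        ≤ ‖∑ χ ∈ (univ : Finset (AddChar (ZMod p) ℂ)).erase 1,
          χ (-b) * ∑ S ∈ powersetCard k D, χ (S.sum id)‖ := Complex.abs_re_le_norm _
      _ ≤ ∑ χ ∈ (univ : Finset (AddChar (ZMod p) ℂ)).erase 1,
          ‖χ (-b) * ∑ S ∈ powersetCard k D, χ (S.sum id)‖ := norm_sum_le _ _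
      _ ≤ ∑ χ ∈ (univ : Finset (AddChar (ZMod p) ℂ)).erase 1, Bfun Φ k := by
          apply Finset.sum_le_sum
          intro χ hχ
          rw [Finset.mem_erase] at hχ
          rw [norm_mul, AddChar.norm_apply, one_mul]
          exact hE χ hχ.1
      _ = (((univ : Finset (AddChar (ZMod p) ℂ)).erase 1).card : ℝ) * Bfun Φ k := by
          rw [Finset.sum_const, nsmul_eq_mul]
      _ ≤ (p:ℝ) * Bfun Φ k := by
          apply mul_le_mul_of_nonneg_right _ (Bfun_nonneg hΦ0 k)
          have : ((univ : Finset (AddChar (ZMod p) ℂ)).erase 1).card ≤ p := by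
            calc ((univ : Finset (AddChar (ZMod p) ℂ)).erase 1).card
                ≤ (univ : Finset (AddChar (ZMod p) ℂ)).card := Finset.card_erase_le
              _ = p := by rw [Finset.card_univ, AddChar.card_eq, ZMod.card]
          exact_mod_cast this
  -- the main inequality
  have hmain : (p:ℝ) * Bfun Φ k < (n.choose k : ℝ) := by
    have hfact : (0:ℝ) < (k.factorial : ℝ) := by positivity
    have h1 : Bfun Φ k ≤ (Φ + k)^k / k.factorial := by
      unfold Bfun
      apply div_le_div_of_nonneg_right _ hfact.le
      calc ∏ j ∈ range k, (Φ + (j:ℝ)) ≤ ∏ j ∈ range k, (Φ + (k:ℝ)) := by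
            apply Finset.prod_le_prod
            · intro j _; positivity
            · intro j hj
              rw [Finset.mem_range] at hj
              have : (j:ℝ) ≤ (k:ℝ) := by exact_mod_cast hj.le
              linarith
        _ = (Φ + (k:ℝ))^k := by rw [Finset.prod_const, Finset.card_range]
    have h2 : Real.exp L * (Φ + k)^k < ((n:ℝ) - k)^k := by
      apply analytic ε A hε hA L n Φ k hL3 hLa hLb hn _ hΦ0 hk1 hk2' hk0
      exact hbias
    have h3 : ((n:ℝ) - k)^k ≤ (k.factorial : ℝ) * (n.choose k : ℝ) := by
      have hnat : ((n + 1 - k)^k : ℕ) ≤ k.factorial * n.choose k := by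
        rw [← Nat.descFactorial_eq_factorial_mul_choose]
        exact Nat.pow_sub_le_descFactorial n k
      have hcast : ((n:ℝ) - k) ≤ (((n + 1 - k : ℕ)):ℝ) := by
        have : ((n + 1 - k : ℕ):ℝ) = (n:ℝ) + 1 - k := by
          have hk : k ≤ n + 1 := by omega
          push_cast [Nat.cast_sub hk]
          ring
        rw [this]
        linarith
      calc ((n:ℝ) - k)^k ≤ (((n + 1 - k : ℕ)):ℝ)^k := by
            apply pow_le_pow_left₀ _ hcast
            have : (k:ℝ) ≤ (n:ℝ)/200 := hk2'
            linarith
        _ = (((n + 1 - k)^k : ℕ) : ℝ) := by push_cast; ring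
        _ ≤ (k.factorial : ℝ) * (n.choose k : ℝ) := by exact_mod_cast hnat
    have hexpL : Real.exp L = (p:ℝ) := by
      rw [hLdef, Real.exp_log]
      exact_mod_cast hp.pos
    calc (p:ℝ) * Bfun Φ k ≤ (p:ℝ) * ((Φ + k)^k / k.factorial) := by
          apply mul_le_mul_of_nonneg_left h1 (by positivity)
      _ = Real.exp L * (Φ + k)^k / k.factorial := by rw [hexpL]; ring
      _ < ((n:ℝ) - k)^k / k.factorial := by
          apply div_lt_div_of_pos_right h2 hfact
      _ ≤ (k.factorial : ℝ) * (n.choose k : ℝ) / k.factorial := by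
          apply div_le_div_of_nonneg_right h3 hfact.le
      _ = (n.choose k : ℝ) := by field_simp
  -- conclude N > 0
  have hNpos : 0 < N := by
    by_contra h
    push_neg at h
    interval_cases N
    · rw [Nat.cast_zero, mul_zero] at hre
      have := abs_le.mp herr
      linarith
  obtain ⟨S, hS⟩ := Finset.card_pos.mp hNpos
  rw [Finset.mem_filter, Finset.mem_powersetCard] at hS
  exact ⟨S, hS.1.1, hS.1.2, hS.2⟩
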